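/- Under the shape-preserving upper-bound structure (Σ ⪯ l Σ̄, B Σ̄ Bᵀ ⪯ b W̄, A W̄ Aᵀ ⪯ ρ² W̄, with l, b > 0, ρ ∈ [0,1), W̄ and Σ̄ positive semidefinite) and Schur-stable A, the truncation error of the position-error proxy satisfies X_∞ − X_t ⪯ (ρ^{2t} / (1 − ρ²)) · b l · X̄ in the Loewner order, where X_t = C (Σ_{s=0}^{t-1} A^s B Σ Bᵀ (Aᵀ)^s) Cᵀ, X_∞ = C (Σ_{s=0}^{∞} A^s B Σ Bᵀ (Aᵀ)^s) Cᵀ, and X̄ = C W̄ Cᵀ. Consequently ‖X_∞ − X_t‖_{op} ≤ ρ^{2t} · (b l / (1 − ρ²)) · ‖X̄‖_{op}. -/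

import Mathlib

open Matrix Filter

/-- The operator (spectral) norm of a real matrix, induced by the Euclidean norms. -/
noncomputable def l2OpNorm {p q : ℕ} (M : Matrix (Fin p) (Fin q) ℝ) : ℝ :=
  ‖LinearMap.toContinuousLinearMap (Matrix.toEuclideanLin M)‖

lemma psd_smul {k : ℕ} {c : ℝ} (hc : 0 ≤ c) {M : Matrix (Fin k) (Fin k) ℝ}
    (hM : M.PosSemidef) : (c • M).PosSemidef := by
  refine Matrix.PosSemidef.of_dotProduct_mulVec_nonneg ?_ ?_
  · show (c • M)ᴴ = _
    have h := hM.1.eq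
    simp only [conjTranspose_eq_transpose_of_trivial] at h ⊢
    simp [h]
  · intro x
    have := hM.dotProduct_mulVec_nonneg x
    simp only [Matrix.smul_mulVec, dotProduct_smul, smul_eq_mul]
    positivity

lemma psd_conj {k j : ℕ} (C : Matrix (Fin j) (Fin k) ℝ) {M : Matrix (Fin k) (Fin k) ℝ}
    (hM : M.PosSemidef) : (C * M * Cᵀ).PosSemidef := by
  simpa using hM.mul_mul_conjTranspose_same C

lemma loewner_trans {k : ℕ} {P Q R : Matrix (Fin k) (Fin k) ℝ}
    (h1 : (Q - P).PosSemidef) (h2 : (R - Q).PosSemidef) : (R - P).PosSemidef := by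
  have := h2.add h1
  simpa using this

lemma loewner_conj {k j : ℕ} (C : Matrix (Fin j) (Fin k) ℝ) {P Q : Matrix (Fin k) (Fin k) ℝ}
    (h : (Q - P).PosSemidef) : (C * Q * Cᵀ - C * P * Cᵀ).PosSemidef := by
  have := psd_conj C h
  simpa [Matrix.mul_sub, Matrix.sub_mul] using this

lemma contraction_pow {k : ℕ} {A Wbar : Matrix (Fin k) (Fin k) ℝ} {ρ : ℝ} (hρ0 : 0 ≤ ρ)
    (hcontr : (ρ ^ 2 • Wbar - A * Wbar * Aᵀ).PosSemidef) (s : ℕ) :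
    (ρ ^ (2 * s) • Wbar - A ^ s * Wbar * (A ^ s)ᵀ).PosSemidef := by
  induction s with
  | zero => simpa using Matrix.PosSemidef.zero
  | succ s ih =>
    have h1 := psd_conj A ih
    have h2 := psd_smul (c := ρ ^ (2 * s)) (by positivity) hcontr
    have h3 := h1.add h2
    have key : A * (ρ ^ (2 * s) • Wbar - A ^ s * Wbar * (A ^ s)ᵀ) * Aᵀ +
        ρ ^ (2 * s) • (ρ ^ 2 • Wbar - A * Wbar * Aᵀ) =
        ρ ^ (2 * (s + 1)) • Wbar - A ^ (s + 1) * Wbar * (A ^ (s + 1))ᵀ := by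
      have e1 : A ^ (s + 1) = A * A ^ s := by rw [pow_succ']
      have e2 : ρ ^ (2 * (s + 1)) = ρ ^ (2 * s) * ρ ^ 2 := by
        rw [← pow_add]; ring_nf
      rw [e1, e2, Matrix.transpose_mul]
      simp only [Matrix.mul_sub, Matrix.sub_mul, smul_sub, smul_smul,
        Matrix.mul_smul, Matrix.smul_mul, Matrix.mul_assoc]
      abel
    rw [key] at h3
    exact h3

lemma psd_sum {k : ℕ} (s : Finset ℕ) (g : ℕ → Matrix (Fin k) (Fin k) ℝ)
    (h : ∀ i ∈ s, (g i).PosSemidef) : (∑ i ∈ s, g i).PosSemidef := by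
  classical
  induction s using Finset.induction_on with
  | empty => simpa using Matrix.PosSemidef.zero
  | insert _ _ hns ih =>
    rw [Finset.sum_insert hns]
    exact (h _ (Finset.mem_insert_self _ _)).add (ih fun i hi => h i (Finset.mem_insert_of_mem hi))

lemma psd_limit {k : ℕ} {f : ℕ → Matrix (Fin k) (Fin k) ℝ} {L : Matrix (Fin k) (Fin k) ℝ}
    (hf : Filter.Tendsto f Filter.atTop (nhds L)) (h : ∀ᶠ N in Filter.atTop, (f N).PosSemidef) :
    L.PosSemidef := by
  refine Matrix.PosSemidef.of_dotProduct_mulVec_nonneg ?_ ?_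
  · have hc : Continuous fun M : Matrix (Fin k) (Fin k) ℝ => Mᴴ :=
      continuous_id.matrix_conjTranspose
    have h1 : Filter.Tendsto (fun N => (f N)ᴴ) Filter.atTop (nhds Lᴴ) :=
      (hc.tendsto L).comp hf
    have h2 : Filter.Tendsto (fun N => (f N)ᴴ) Filter.atTop (nhds L) := by
      refine Filter.Tendsto.congr' ?_ hf
      filter_upwards [h] with N hN using (hN.1).symm
    exact tendsto_nhds_unique h1 h2
  · intro x
    have hc : Continuous fun M : Matrix (Fin k) (Fin k) ℝ => star x ⬝ᵥ M *ᵥ x :=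
      Continuous.dotProduct continuous_const
        (Continuous.matrix_mulVec continuous_id continuous_const)
    have h1 : Filter.Tendsto (fun N => star x ⬝ᵥ (f N) *ᵥ x) Filter.atTop
        (nhds (star x ⬝ᵥ L *ᵥ x)) := (hc.tendsto L).comp hf
    refine ge_of_tendsto h1 ?_
    filter_upwards [h] with N hN using hN.dotProduct_mulVec_nonneg x

section OpNorm
open scoped Matrix.Norms.L2Operator MatrixOrder

lemma l2OpNorm_eq_norm {k j : ℕ} (M : Matrix (Fin j) (Fin k) ℝ) : l2OpNorm M = ‖M‖ := rfl

lemma l2OpNorm_smul_of_nonneg {k j : ℕ} {c : ℝ} (hc : 0 ≤ c) (M : Matrix (Fin j) (Fin k) ℝ) :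
    l2OpNorm (c • M) = c * l2OpNorm M := by
  rw [l2OpNorm_eq_norm, l2OpNorm_eq_norm, norm_smul, Real.norm_of_nonneg hc]

lemma psd_norm_mono {k : ℕ} {P Q : Matrix (Fin k) (Fin k) ℝ}
    (hP : P.PosSemidef) (hQ : Q.PosSemidef) (h : (Q - P).PosSemidef) :
    l2OpNorm P ≤ l2OpNorm Q := by
  rw [l2OpNorm_eq_norm, l2OpNorm_eq_norm]
  have hQn : (0:ℝ) ≤ ‖Q‖ := norm_nonneg _
  obtain ⟨R, hRP⟩ : ∃ R : Matrix (Fin k) (Fin k) ℝ, Rᴴ * R = P := by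
    obtain ⟨B, hB⟩ := CStarAlgebra.nonneg_iff_eq_star_mul_self.mp hP.nonneg
    exact ⟨B, hB.symm⟩
  have hPn : ‖P‖ = ‖R‖ * ‖R‖ := by rw [← hRP, Matrix.l2_opNorm_conjTranspose_mul_self]
  have hRle : ‖R‖ ≤ Real.sqrt ‖Q‖ := by
    rw [Matrix.l2_opNorm_def]
    refine ContinuousLinearMap.opNorm_le_bound _ (Real.sqrt_nonneg _) fun x => ?_
    set y := (Matrix.toEuclideanLin R).toContinuousLinearMap x with hy
    have hinner : ‖y‖ * ‖y‖ = (WithLp.equiv 2 _ x) ⬝ᵥ P *ᵥ (WithLp.equiv 2 _ x) := by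
      rw [← real_inner_self_eq_norm_mul_norm]
      rw [hy]
      simp only [LinearMap.coe_toContinuousLinearMap', Matrix.toEuclideanLin_apply]
      rw [EuclideanSpace.inner_eq_star_dotProduct]
      change R *ᵥ (WithLp.equiv 2 (Fin k → ℝ) x) ⬝ᵥ star (R *ᵥ (WithLp.equiv 2 (Fin k → ℝ) x)) = _
      set v := (WithLp.equiv 2 (Fin k → ℝ)) x with hv
      rw [star_mulVec, ← hRP, ← Matrix.mulVec_mulVec, Matrix.dotProduct_mulVec v]
      simp [star_trivial]
      exact dotProduct_comm _ _
    have hbound : ‖y‖ * ‖y‖ ≤ ‖Q‖ * (‖x‖ * ‖x‖) := by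
      rw [hinner]
      set v := (WithLp.equiv 2 (Fin k → ℝ)) x with hv
      have h1 : v ⬝ᵥ P *ᵥ v ≤ v ⬝ᵥ Q *ᵥ v := by
        have := h.dotProduct_mulVec_nonneg v
        simp only [star_trivial, Matrix.sub_mulVec, dotProduct_sub] at this
        linarith
      have h2 : v ⬝ᵥ Q *ᵥ v ≤ ‖Q‖ * (‖x‖ * ‖x‖) := by
        have he : v ⬝ᵥ Q *ᵥ v =
            inner ℝ ((Matrix.toEuclideanLin Q).toContinuousLinearMap x) x := by
          rw [real_inner_comm, EuclideanSpace.inner_eq_star_dotProduct]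
          simp only [LinearMap.coe_toContinuousLinearMap', Matrix.toEuclideanLin_apply,
            Equiv.apply_symm_apply, star_trivial, hv]
          exact dotProduct_comm _ _
        rw [he]
        calc inner ℝ ((Matrix.toEuclideanLin Q).toContinuousLinearMap x) x
            ≤ ‖(Matrix.toEuclideanLin Q).toContinuousLinearMap x‖ * ‖x‖ :=
              real_inner_le_norm _ _
          _ ≤ ‖(Matrix.toEuclideanLin Q).toContinuousLinearMap‖ * ‖x‖ * ‖x‖ := by
              have := ContinuousLinearMap.le_opNorm
                ((Matrix.toEuclideanLin Q).toContinuousLinearMap) x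
              nlinarith [norm_nonneg x]
          _ ≤ ‖Q‖ * (‖x‖ * ‖x‖) := by
              rw [Matrix.l2_opNorm_def, LinearEquiv.trans_apply]; nlinarith [norm_nonneg x]
      linarith
    have : ‖y‖ ≤ Real.sqrt ‖Q‖ * ‖x‖ := by
      have h1 : (0:ℝ) ≤ Real.sqrt ‖Q‖ * ‖x‖ := by positivity
      nlinarith [Real.sq_sqrt hQn, Real.sqrt_nonneg ‖Q‖, norm_nonneg y, norm_nonneg x,
        Real.mul_self_sqrt hQn]
    exact this
  calc ‖P‖ = ‖R‖ * ‖R‖ := hPn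
    _ ≤ Real.sqrt ‖Q‖ * Real.sqrt ‖Q‖ := by nlinarith [norm_nonneg R, Real.sqrt_nonneg ‖Q‖]
    _ = ‖Q‖ := Real.mul_self_sqrt hQn

end OpNorm

/-- **Finite-horizon convergence of the position-error proxy.**
Under the shape-preserving upper-bound structure (`Σ ⪯ l Σ̄`, `B Σ̄ Bᵀ ⪯ b W̄`,
`A W̄ Aᵀ ⪯ ρ² W̄`, `l, b > 0`, `ρ ∈ [0,1)`) and Schur-stable `A`, the truncation error
satisfies `X_∞ − X_t ⪯ (ρ^{2t}/(1 − ρ²)) b l X̄` in the Loewner order, and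
consequently `‖X_∞ − X_t‖_op ≤ ρ^{2t} (b l/(1 − ρ²)) ‖X̄‖_op`. -/
theorem proxy_truncation_bound
    {d m n : ℕ}
    (A : Matrix (Fin d) (Fin d) ℝ) (B : Matrix (Fin d) (Fin m) ℝ)
    (C : Matrix (Fin n) (Fin d) ℝ)
    (Sg : Matrix (Fin m) (Fin m) ℝ) (hSg : Sg.PosSemidef)
    (hA : ∀ z ∈ spectrum ℂ (A.map (algebraMap ℝ ℂ)), ‖z‖ < 1)
    (Wbar : Matrix (Fin d) (Fin d) ℝ) (hWbar : Wbar.PosSemidef)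
    (Sbar : Matrix (Fin m) (Fin m) ℝ) (hSbar : Sbar.PosSemidef)
    (l b : ℝ) (hl : 0 < l) (hb : 0 < b)
    (ρ : ℝ) (hρ0 : 0 ≤ ρ) (hρ1 : ρ < 1)
    (hlabel : (l • Sbar - Sg).PosSemidef)
    (hinj : (b • Wbar - B * Sbar * Bᵀ).PosSemidef)
    (hcontr : (ρ ^ 2 • Wbar - A * Wbar * Aᵀ).PosSemidef)
    (Sinf : Matrix (Fin d) (Fin d) ℝ)
    (hSinf : Tendsto (fun t => ∑ s ∈ Finset.range t, A ^ s * (B * Sg * Bᵀ) * (Aᵀ) ^ s)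
      atTop (nhds Sinf))
    (t : ℕ) :
    ((ρ ^ (2 * t) / (1 - ρ ^ 2) * (b * l)) • (C * Wbar * Cᵀ) -
        (C * Sinf * Cᵀ -
          C * (∑ s ∈ Finset.range t, A ^ s * (B * Sg * Bᵀ) * (Aᵀ) ^ s) * Cᵀ)).PosSemidef ∧
      l2OpNorm (C * Sinf * Cᵀ -
          C * (∑ s ∈ Finset.range t, A ^ s * (B * Sg * Bᵀ) * (Aᵀ) ^ s) * Cᵀ) ≤
        ρ ^ (2 * t) * (b * l / (1 - ρ ^ 2)) * l2OpNorm (C * Wbar * Cᵀ) := by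
  have hρ2 : ρ ^ 2 < 1 := by nlinarith
  have h1ρ : 0 < 1 - ρ ^ 2 := by linarith
  have hc0 : 0 ≤ ρ ^ (2 * t) / (1 - ρ ^ 2) * (b * l) := by positivity
  set St := ∑ s ∈ Finset.range t, A ^ s * (B * Sg * Bᵀ) * (Aᵀ) ^ s with hSt
  -- per-term bound
  have hterm : ∀ s : ℕ,
      ((b * l * ρ ^ (2 * s)) • Wbar - A ^ s * (B * Sg * Bᵀ) * (Aᵀ) ^ s).PosSemidef := by
    intro s
    have h1 : (l • (B * Sbar * Bᵀ) - B * Sg * Bᵀ).PosSemidef := by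
      have := loewner_conj B hlabel
      simpa [Matrix.mul_smul, Matrix.smul_mul] using this
    have h2 : ((l * b) • Wbar - l • (B * Sbar * Bᵀ)).PosSemidef := by
      have := psd_smul hl.le hinj
      simpa [smul_sub, smul_smul] using this
    have h3 := loewner_trans h1 h2
    have h4 := loewner_conj (A ^ s) h3
    have h4' : ((l * b) • (A ^ s * Wbar * (A ^ s)ᵀ) -
        A ^ s * (B * Sg * Bᵀ) * (A ^ s)ᵀ).PosSemidef := by
      simpa [Matrix.mul_smul, Matrix.smul_mul] using h4
    have h5 : ((l * b) • (ρ ^ (2 * s) • Wbar) -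
        (l * b) • (A ^ s * Wbar * (A ^ s)ᵀ)).PosSemidef := by
      have := psd_smul (mul_nonneg hl.le hb.le) (contraction_pow hρ0 hcontr s)
      simpa [smul_sub] using this
    have h6 := loewner_trans h4' h5
    have e : (l * b) • ρ ^ (2 * s) • Wbar = (b * l * ρ ^ (2 * s)) • Wbar := by
      rw [smul_smul]; ring_nf
    rw [e] at h6
    have et : (A ^ s)ᵀ = (Aᵀ) ^ s := Matrix.transpose_pow A s
    rwa [et] at h6
  -- tail bound on partial sums
  have htail : ∀ N : ℕ, t ≤ N →
      ((ρ ^ (2 * t) / (1 - ρ ^ 2) * (b * l)) • Wbar -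
        ((∑ s ∈ Finset.range N, A ^ s * (B * Sg * Bᵀ) * (Aᵀ) ^ s) - St)).PosSemidef := by
    intro N hN
    have hsub : (∑ s ∈ Finset.range N, A ^ s * (B * Sg * Bᵀ) * (Aᵀ) ^ s) - St =
        ∑ s ∈ Finset.Ico t N, A ^ s * (B * Sg * Bᵀ) * (Aᵀ) ^ s := by
      rw [hSt, Finset.sum_Ico_eq_sub _ hN]
    rw [hsub]
    have hpsd : (∑ s ∈ Finset.Ico t N,
        ((b * l * ρ ^ (2 * s)) • Wbar - A ^ s * (B * Sg * Bᵀ) * (Aᵀ) ^ s)).PosSemidef :=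
      psd_sum _ _ fun i _ => hterm i
    rw [Finset.sum_sub_distrib, ← Finset.sum_smul] at hpsd
    have hgeom : ∑ s ∈ Finset.Ico t N, (ρ ^ 2) ^ s ≤ (ρ ^ 2) ^ t * (1 - ρ ^ 2)⁻¹ := by
      rw [Finset.sum_Ico_eq_sum_range]
      have e2 : ∀ i : ℕ, (ρ ^ 2) ^ (t + i) = (ρ ^ 2) ^ t * (ρ ^ 2) ^ i := fun i => pow_add _ _ _
      calc ∑ i ∈ Finset.range (N - t), (ρ ^ 2) ^ (t + i)
          = (ρ ^ 2) ^ t * ∑ i ∈ Finset.range (N - t), (ρ ^ 2) ^ i := by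
            rw [Finset.mul_sum]; exact Finset.sum_congr rfl fun i _ => e2 i
        _ ≤ (ρ ^ 2) ^ t * (1 - ρ ^ 2)⁻¹ := by
            have hg : ∑ i ∈ Finset.range (N - t), (ρ ^ 2) ^ i ≤ (1 - ρ ^ 2)⁻¹ := by
              have ht := tsum_geometric_of_lt_one (by positivity : (0:ℝ) ≤ ρ ^ 2) hρ2
              rw [← ht]
              exact Summable.sum_le_tsum _ (fun i _ => by positivity)
                (summable_geometric_of_lt_one (by positivity) hρ2)
            have : (0:ℝ) ≤ (ρ ^ 2) ^ t := by positivity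
            nlinarith
    have hcoef : ∑ s ∈ Finset.Ico t N, b * l * ρ ^ (2 * s) ≤
        ρ ^ (2 * t) / (1 - ρ ^ 2) * (b * l) := by
      have e1 : ∑ s ∈ Finset.Ico t N, b * l * ρ ^ (2 * s) =
          b * l * ∑ s ∈ Finset.Ico t N, (ρ ^ 2) ^ s := by
        rw [Finset.mul_sum]
        exact Finset.sum_congr rfl fun s _ => by rw [pow_mul]
      rw [e1]
      have e3 : ρ ^ (2 * t) / (1 - ρ ^ 2) * (b * l) =
          b * l * ((ρ ^ 2) ^ t * (1 - ρ ^ 2)⁻¹) := by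
        rw [← pow_mul]; field_simp
      rw [e3]
      have hbl : (0:ℝ) ≤ b * l := by positivity
      nlinarith
    have hextra : (((ρ ^ (2 * t) / (1 - ρ ^ 2) * (b * l)) -
        ∑ s ∈ Finset.Ico t N, b * l * ρ ^ (2 * s)) • Wbar).PosSemidef :=
      psd_smul (by linarith) hWbar
    have hadd := hextra.add hpsd
    have ee : ((ρ ^ (2 * t) / (1 - ρ ^ 2) * (b * l)) -
          ∑ s ∈ Finset.Ico t N, b * l * ρ ^ (2 * s)) • Wbar +
        ((∑ s ∈ Finset.Ico t N, b * l * ρ ^ (2 * s)) • Wbar -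
          ∑ s ∈ Finset.Ico t N, A ^ s * (B * Sg * Bᵀ) * (Aᵀ) ^ s) =
        (ρ ^ (2 * t) / (1 - ρ ^ 2) * (b * l)) • Wbar -
          ∑ s ∈ Finset.Ico t N, A ^ s * (B * Sg * Bᵀ) * (Aᵀ) ^ s := by
      rw [sub_smul]; abel
    rwa [ee] at hadd
  -- conjugated tail bound
  have hconj : ∀ N : ℕ, t ≤ N →
      ((ρ ^ (2 * t) / (1 - ρ ^ 2) * (b * l)) • (C * Wbar * Cᵀ) -
        (C * (∑ s ∈ Finset.range N, A ^ s * (B * Sg * Bᵀ) * (Aᵀ) ^ s) * Cᵀ -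
          C * St * Cᵀ)).PosSemidef := by
    intro N hN
    have := loewner_conj C (htail N hN)
    simpa [Matrix.mul_smul, Matrix.smul_mul, Matrix.mul_sub, Matrix.sub_mul] using this
  -- limits
  have hmulcont : Continuous fun M : Matrix (Fin d) (Fin d) ℝ => C * M * Cᵀ :=
    (continuous_const.matrix_mul continuous_id).matrix_mul continuous_const
  have h1 : Tendsto (fun N => C * (∑ s ∈ Finset.range N,
      A ^ s * (B * Sg * Bᵀ) * (Aᵀ) ^ s) * Cᵀ) atTop (nhds (C * Sinf * Cᵀ)) :=
    (hmulcont.tendsto _).comp hSinf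
  have htendsto : Tendsto (fun N =>
      (ρ ^ (2 * t) / (1 - ρ ^ 2) * (b * l)) • (C * Wbar * Cᵀ) -
        (C * (∑ s ∈ Finset.range N, A ^ s * (B * Sg * Bᵀ) * (Aᵀ) ^ s) * Cᵀ - C * St * Cᵀ))
      atTop (nhds ((ρ ^ (2 * t) / (1 - ρ ^ 2) * (b * l)) • (C * Wbar * Cᵀ) -
        (C * Sinf * Cᵀ - C * St * Cᵀ))) :=
    tendsto_const_nhds.sub (h1.sub tendsto_const_nhds)
  have goal1 := psd_limit htendsto (eventually_atTop.2 ⟨t, hconj⟩)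
  refine ⟨goal1, ?_⟩
  -- second part: norm bound
  have hDpsd : (C * Sinf * Cᵀ - C * St * Cᵀ).PosSemidef := by
    refine psd_limit (f := fun N =>
      C * (∑ s ∈ Finset.range N, A ^ s * (B * Sg * Bᵀ) * (Aᵀ) ^ s) * Cᵀ - C * St * Cᵀ)
      (h1.sub tendsto_const_nhds) (eventually_atTop.2 ⟨t, fun N hN => ?_⟩)
    have hsub : (∑ s ∈ Finset.range N, A ^ s * (B * Sg * Bᵀ) * (Aᵀ) ^ s) - St =
        ∑ s ∈ Finset.Ico t N, A ^ s * (B * Sg * Bᵀ) * (Aᵀ) ^ s := by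
      rw [hSt, Finset.sum_Ico_eq_sub _ hN]
    have hpsd : (∑ s ∈ Finset.Ico t N,
        A ^ s * (B * Sg * Bᵀ) * (Aᵀ) ^ s).PosSemidef := by
      refine psd_sum _ _ fun i _ => ?_
      have : (A ^ i * (B * Sg * Bᵀ) * (A ^ i)ᵀ).PosSemidef :=
        psd_conj (A ^ i) (psd_conj B hSg)
      rwa [Matrix.transpose_pow] at this
    have hD := psd_conj C (hsub ▸ hpsd : ((∑ s ∈ Finset.range N,
        A ^ s * (B * Sg * Bᵀ) * (Aᵀ) ^ s) - St).PosSemidef)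
    simpa [Matrix.mul_sub, Matrix.sub_mul] using hD
  have hXpsd : ((ρ ^ (2 * t) / (1 - ρ ^ 2) * (b * l)) • (C * Wbar * Cᵀ)).PosSemidef :=
    psd_smul hc0 (psd_conj C hWbar)
  have hnorm := psd_norm_mono hDpsd hXpsd goal1
  rw [l2OpNorm_smul_of_nonneg hc0] at hnorm
  calc l2OpNorm (C * Sinf * Cᵀ - C * St * Cᵀ)
      ≤ ρ ^ (2 * t) / (1 - ρ ^ 2) * (b * l) * l2OpNorm (C * Wbar * Cᵀ) := hnorm
    _ = ρ ^ (2 * t) * (b * l / (1 - ρ ^ 2)) * l2OpNorm (C * Wbar * Cᵀ) := by ring
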